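/- Let r be an odd natural number. Then the dimension over ℝ of the kernel of Φ_sym (the eigenspace of Φ_sym for the eigenvalue 0) is at least (r−1)/6 if r ≡ 1 (mod 6), at least (r+3)/6 if r ≡ 3 (mod 6), and at least (r+1)/6 if r ≡ 5 (mod 6). -/
import Mathlib


open MvPolynomial

/-- The substitution `(σ* f)(x,y) = f(x+y, y)` as a linear endomorphism of the
polynomial ring `ℝ[x,y]`. -/
noncomputable def sigmaStar : MvPolynomial (Fin 2) ℝ →ₗ[ℝ] MvPolynomial (Fin 2) ℝ :=
  (aeval ![X 0 + X 1, X 1]).toLinearMap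

/-- The substitution `(τ* f)(x,y) = f(x, x+y)` as a linear endomorphism of the
polynomial ring `ℝ[x,y]`. -/
noncomputable def tauStar : MvPolynomial (Fin 2) ℝ →ₗ[ℝ] MvPolynomial (Fin 2) ℝ :=
  (aeval ![X 0, X 0 + X 1]).toLinearMap

/-- The operator `Φ : f(x,y) ↦ f(x+y, y) + f(x, x+y)`.  It preserves the space of
homogeneous polynomials of each degree `r`. -/
noncomputable def Phi : MvPolynomial (Fin 2) ℝ →ₗ[ℝ] MvPolynomial (Fin 2) ℝ :=
  sigmaStar + tauStar

/-- The swap substitution `f(x,y) ↦ f(y,x)` as a linear endomorphism. -/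
noncomputable def swapStar : MvPolynomial (Fin 2) ℝ →ₗ[ℝ] MvPolynomial (Fin 2) ℝ :=
  (aeval ![X 1, X 0]).toLinearMap

/-- The space `V` of homogeneous polynomials of degree `r` in two variables. -/
noncomputable abbrev V (r : ℕ) : Submodule ℝ (MvPolynomial (Fin 2) ℝ) :=
  MvPolynomial.homogeneousSubmodule (Fin 2) ℝ r

/-- The subspace of `V` spanned by all polynomials of the form `f(x,y) - f(y,x)`. -/
noncomputable def K (r : ℕ) : Submodule ℝ ↥(V r) :=
  Submodule.span ℝ
    {g : ↥(V r) | ∃ f : ↥(V r),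
      (g : MvPolynomial (Fin 2) ℝ) = (f : MvPolynomial (Fin 2) ℝ) - swapStar f}

/-! ### Auxiliary constructions -/

/-- The cubic `2x³ - 3x²y - 3xy² + 2y³`.  It is symmetric and satisfies
`p₃(x+y, y) = -p₃(x, x+y)`. -/
noncomputable def P3 : MvPolynomial (Fin 2) ℝ :=
  2 * X 0 ^ 3 - 3 * X 0 ^ 2 * X 1 - 3 * X 0 * X 1 ^ 2 + 2 * X 1 ^ 3

/-- The quadratic `x² - xy + y²`.  It is symmetric and satisfies
`q(x+y, y) = q(x, x+y)`. -/
noncomputable def Q2 : MvPolynomial (Fin 2) ℝ :=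
  X 0 ^ 2 - X 0 * X 1 + X 1 ^ 2

/-- `p₃(x+y, y)`. -/
noncomputable def A3 : MvPolynomial (Fin 2) ℝ :=
  2 * X 0 ^ 3 + 3 * X 0 ^ 2 * X 1 - 3 * X 0 * X 1 ^ 2 - 2 * X 1 ^ 3

lemma sigma_P3 : (aeval ![X 0 + X 1, X 1]) P3 = A3 := by
  simp only [P3, A3, map_add, map_sub, map_mul, map_pow, map_ofNat, aeval_X,
    Matrix.cons_val_zero, Matrix.cons_val_one, Matrix.head_cons]
  ring

lemma tau_P3 : (aeval ![X 0, X 0 + X 1]) P3 = -A3 := by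
  simp only [P3, A3, map_add, map_sub, map_mul, map_pow, map_ofNat, aeval_X,
    Matrix.cons_val_zero, Matrix.cons_val_one, Matrix.head_cons]
  ring

lemma sigma_Q2 : (aeval ![X 0 + X 1, X 1]) Q2 = (X 0 ^ 2 + X 0 * X 1 + X 1 ^ 2 : MvPolynomial (Fin 2) ℝ) := by
  simp only [Q2, map_add, map_sub, map_mul, map_pow, aeval_X,
    Matrix.cons_val_zero, Matrix.cons_val_one, Matrix.head_cons]
  ring

lemma tau_Q2 : (aeval ![X 0, X 0 + X 1]) Q2 = (X 0 ^ 2 + X 0 * X 1 + X 1 ^ 2 : MvPolynomial (Fin 2) ℝ) := by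
  simp only [Q2, map_add, map_sub, map_mul, map_pow, aeval_X,
    Matrix.cons_val_zero, Matrix.cons_val_one, Matrix.head_cons]
  ring

lemma swap_P3 : (aeval ![X 1, X 0]) P3 = P3 := by
  simp only [P3, map_add, map_sub, map_mul, map_pow, map_ofNat, aeval_X,
    Matrix.cons_val_zero, Matrix.cons_val_one, Matrix.head_cons]
  ring

lemma swap_Q2 : (aeval ![X 1, X 0]) Q2 = Q2 := by
  simp only [Q2, map_add, map_sub, map_mul, map_pow, aeval_X,
    Matrix.cons_val_zero, Matrix.cons_val_one, Matrix.head_cons]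
  ring

/-- The key vanishing: for odd `m`, `Φ (P3 ^ m * Q2 ^ a) = 0`. -/
lemma Phi_fk (m a : ℕ) (hm : Odd m) : Phi (P3 ^ m * Q2 ^ a) = 0 := by
  have h1 : sigmaStar (P3 ^ m * Q2 ^ a)
      = A3 ^ m * (X 0 ^ 2 + X 0 * X 1 + X 1 ^ 2) ^ a := by
    show (aeval ![X 0 + X 1, X 1]) (P3 ^ m * Q2 ^ a) = _
    rw [map_mul, map_pow, map_pow, sigma_P3, sigma_Q2]
  have h2 : tauStar (P3 ^ m * Q2 ^ a)
      = (-A3) ^ m * (X 0 ^ 2 + X 0 * X 1 + X 1 ^ 2) ^ a := by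
    show (aeval ![X 0, X 0 + X 1]) (P3 ^ m * Q2 ^ a) = _
    rw [map_mul, map_pow, map_pow, tau_P3, tau_Q2]
  show sigmaStar (P3 ^ m * Q2 ^ a) + tauStar (P3 ^ m * Q2 ^ a) = 0
  rw [h1, h2, hm.neg_pow]
  ring

lemma swap_fk (m a : ℕ) : swapStar (P3 ^ m * Q2 ^ a) = P3 ^ m * Q2 ^ a := by
  show (aeval ![X 1, X 0]) (P3 ^ m * Q2 ^ a) = _
  rw [map_mul, map_pow, map_pow, swap_P3, swap_Q2]

lemma P3_hom : P3.IsHomogeneous 3 := by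
  have hX0 : (X (0 : Fin 2) : MvPolynomial (Fin 2) ℝ).IsHomogeneous 1 := isHomogeneous_X _ _
  have hX1 : (X (1 : Fin 2) : MvPolynomial (Fin 2) ℝ).IsHomogeneous 1 := isHomogeneous_X _ _
  have e2 : ((2 : MvPolynomial (Fin 2) ℝ)) = C (2 : ℝ) :=
    (map_ofNat (C : ℝ →+* MvPolynomial (Fin 2) ℝ) 2).symm
  have e3 : ((3 : MvPolynomial (Fin 2) ℝ)) = C (3 : ℝ) :=
    (map_ofNat (C : ℝ →+* MvPolynomial (Fin 2) ℝ) 3).symm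
  have t1 : ((2 : MvPolynomial (Fin 2) ℝ) * X 0 ^ 3).IsHomogeneous 3 := by
    rw [e2]; simpa using (hX0.pow 3).C_mul 2
  have t2 : ((3 : MvPolynomial (Fin 2) ℝ) * X 0 ^ 2 * X 1).IsHomogeneous 3 := by
    rw [e3, mul_assoc]; simpa using ((hX0.pow 2).mul hX1).C_mul 3
  have t3 : ((3 : MvPolynomial (Fin 2) ℝ) * X 0 * X 1 ^ 2).IsHomogeneous 3 := by
    rw [e3, mul_assoc]; simpa using (hX0.mul (hX1.pow 2)).C_mul 3
  have t4 : ((2 : MvPolynomial (Fin 2) ℝ) * X 1 ^ 3).IsHomogeneous 3 := by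
    rw [e2]; simpa using (hX1.pow 3).C_mul 2
  exact ((t1.sub t2).sub t3).add t4

lemma Q2_hom : Q2.IsHomogeneous 2 := by
  have hX0 : (X (0 : Fin 2) : MvPolynomial (Fin 2) ℝ).IsHomogeneous 1 := isHomogeneous_X _ _
  have hX1 : (X (1 : Fin 2) : MvPolynomial (Fin 2) ℝ).IsHomogeneous 1 := isHomogeneous_X _ _
  have t1 : ((X (0 : Fin 2) : MvPolynomial (Fin 2) ℝ) ^ 2).IsHomogeneous 2 := by
    simpa using hX0.pow 2
  have t2 : ((X (0 : Fin 2) : MvPolynomial (Fin 2) ℝ) * X 1).IsHomogeneous 2 := hX0.mul hX1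
  have t3 : ((X (1 : Fin 2) : MvPolynomial (Fin 2) ℝ) ^ 2).IsHomogeneous 2 := by
    simpa using hX1.pow 2
  exact (t1.sub t2).add t3

lemma swap_swap (p : MvPolynomial (Fin 2) ℝ) : swapStar (swapStar p) = p := by
  show (aeval ![X 1, X 0]) ((aeval ![X 1, X 0]) p) = p
  induction p using MvPolynomial.induction_on with
  | C a => simp only [aeval_C, MvPolynomial.algebraMap_eq]
  | add p q hp hq => rw [map_add, map_add, hp, hq]
  | mul_X p n hp =>
      have hX : ∀ n : Fin 2,
          (aeval (![X 1, X 0] : Fin 2 → MvPolynomial (Fin 2) ℝ))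
            ((aeval (![X 1, X 0] : Fin 2 → MvPolynomial (Fin 2) ℝ))
              (X n : MvPolynomial (Fin 2) ℝ)) = X n := by
        intro n; fin_cases n <;> simp
      rw [map_mul, map_mul, hp, hX]

lemma K_antisym {r : ℕ} {u : ↥(V r)} (hu : u ∈ K r) :
    swapStar (u : MvPolynomial (Fin 2) ℝ) = -(u : MvPolynomial (Fin 2) ℝ) := by
  induction hu using Submodule.span_induction with
  | mem x hx =>
      obtain ⟨f, hf⟩ := hx
      rw [hf, map_sub, swap_swap]
      abel
  | zero => simp
  | add x y hx hy ihx ihy =>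
      simp only [Submodule.coe_add, map_add, ihx, ihy]
      abel
  | smul t x hx ih =>
      simp only [SetLike.val_smul, map_smul, ih, smul_neg]

/-- The dehomogenizing/shifting map `x ↦ 1`, `y ↦ X - 1`. -/
noncomputable def phiMap : MvPolynomial (Fin 2) ℝ →ₐ[ℝ] Polynomial ℝ :=
  aeval ![(1 : Polynomial ℝ), Polynomial.X - 1]

lemma phi_P3 : phiMap P3
    = Polynomial.X * (2 * Polynomial.X ^ 2 - 9 * Polynomial.X + 9) := by
  simp only [phiMap, P3, map_add, map_sub, map_mul, map_pow, map_ofNat, map_one, aeval_X,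
    Matrix.cons_val_zero, Matrix.cons_val_one, Matrix.head_cons]
  ring

lemma phi_Q2 : phiMap Q2 = Polynomial.X ^ 2 - 3 * Polynomial.X + 3 := by
  simp only [phiMap, Q2, map_add, map_sub, map_mul, map_pow, map_ofNat, map_one, aeval_X,
    Matrix.cons_val_zero, Matrix.cons_val_one, Matrix.head_cons]
  ring

/-- Linear independence of the polynomials `P3 ^ (2k+1) * Q2 ^ (a k)`. -/
lemma poly_indep {N : ℕ} (a : Fin N → ℕ) (s : Finset (Fin N)) (g : Fin N → ℝ)
    (h : ∑ k ∈ s, g k • (P3 ^ (2 * (k : ℕ) + 1) * Q2 ^ (a k)) = 0) :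
    ∀ i ∈ s, g i = 0 := by
  set Q1 : Polynomial ℝ := 2 * Polynomial.X ^ 2 - 9 * Polynomial.X + 9 with hQ1
  set Q2' : Polynomial ℝ := Polynomial.X ^ 2 - 3 * Polynomial.X + 3 with hQ2'
  have h2 : ∑ k ∈ s, g k •
      (Polynomial.X ^ (2 * (k : ℕ) + 1) * (Q1 ^ (2 * (k : ℕ) + 1) * Q2' ^ (a k))) = 0 := by
    have h0 := congrArg phiMap h
    rw [map_sum, map_zero] at h0
    rw [← h0]
    refine Finset.sum_congr rfl fun k _ => ?_
    rw [map_smul, map_mul, map_pow, map_pow, phi_P3, phi_Q2, mul_pow, mul_assoc]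
  suffices H : ∀ n : ℕ, ∀ i ∈ s, (i : ℕ) = n → g i = 0 by
    intro i hi; exact H (i : ℕ) i hi rfl
  intro n
  induction n using Nat.strong_induction_on with
  | _ n IH =>
    intro i hi hin
    have hcoeff := congrArg (fun p => Polynomial.coeff p (2 * n + 1)) h2
    simp only [Polynomial.finset_sum_coeff, Polynomial.coeff_zero] at hcoeff
    rw [Finset.sum_eq_single i] at hcoeff
    · have hXc : (Polynomial.X ^ (2 * (i : ℕ) + 1)
          * (Q1 ^ (2 * (i : ℕ) + 1) * Q2' ^ (a i))).coeff (2 * n + 1)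
          = (Q1 ^ (2 * (i : ℕ) + 1) * Q2' ^ (a i)).coeff 0 := by
        rw [hin]
        simpa using Polynomial.coeff_X_pow_mul (Q1 ^ (2 * n + 1) * Q2' ^ (a i)) (2 * n + 1) 0
      rw [Polynomial.coeff_smul, hXc, smul_eq_mul] at hcoeff
      have hne : (Q1 ^ (2 * (i : ℕ) + 1) * Q2' ^ (a i)).coeff 0 ≠ 0 := by
        rw [Polynomial.coeff_zero_eq_eval_zero]
        simp only [hQ1, hQ2', Polynomial.eval_mul, Polynomial.eval_pow, Polynomial.eval_add,
          Polynomial.eval_sub, Polynomial.eval_mul, Polynomial.eval_ofNat, Polynomial.eval_pow,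
          Polynomial.eval_X]
        norm_num
      rcases mul_eq_zero.mp hcoeff with h' | h'
      · exact h'
      · exact absurd h' hne
    · intro b hb hbne
      rcases lt_trichotomy (b : ℕ) n with hlt | heq | hgt
      · rw [IH _ hlt b hb rfl, zero_smul, Polynomial.coeff_zero]
      · exact absurd (Fin.ext (heq.trans hin.symm)) hbne
      · have hc0 : (Polynomial.X ^ (2 * (b : ℕ) + 1)
            * (Q1 ^ (2 * (b : ℕ) + 1) * Q2' ^ (a b))).coeff (2 * n + 1) = 0 := by
          rw [mul_comm, Polynomial.coeff_mul_X_pow', if_neg (by omega)]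
        rw [Polynomial.coeff_smul, hc0, smul_zero]
    · intro his; exact absurd hi his

/-- For odd `r`, the dimension of the kernel of `Φ_sym` (the eigenspace of `Φ_sym`
for the eigenvalue `0`) is at least `(r-1)/6` if `r ≡ 1 (mod 6)`, at least `(r+3)/6`
if `r ≡ 3 (mod 6)`, and at least `(r+1)/6` if `r ≡ 5 (mod 6)`.  Here `Φ_sym` is the
operator induced by `Φ` on the quotient `V_sym = V / K`, characterized by the
compatibility hypothesis `hsym`. -/
theorem dim_ker_PhiSym (r : ℕ) (hr : Odd r)
    (PhiSym : (↥(V r) ⧸ K r) →ₗ[ℝ] (↥(V r) ⧸ K r))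
    (hsym : ∀ f g : ↥(V r),
      Phi (f : MvPolynomial (Fin 2) ℝ) = (g : MvPolynomial (Fin 2) ℝ) →
      PhiSym (Submodule.Quotient.mk f) = Submodule.Quotient.mk g) :
    (r % 6 = 1 → (r - 1) / 6 ≤ Module.finrank ℝ ↥(LinearMap.ker PhiSym)) ∧
    (r % 6 = 3 → (r + 3) / 6 ≤ Module.finrank ℝ ↥(LinearMap.ker PhiSym)) ∧
    (r % 6 = 5 → (r + 1) / 6 ≤ Module.finrank ℝ ↥(LinearMap.ker PhiSym)) := by
  have hr2 : r % 2 = 1 := Nat.odd_iff.mp hr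
  have main : (r + 3) / 6 ≤ Module.finrank ℝ ↥(LinearMap.ker PhiSym) := by
    set N : ℕ := (r + 3) / 6 with hN
    set a : ℕ → ℕ := fun k => (r - (6 * k + 3)) / 2 with ha
    have hdeg : ∀ k : ℕ, k < N → 3 * (2 * k + 1) + 2 * a k = r := by
      intro k hk
      simp only [ha]
      omega
    have hfhom : ∀ k : Fin N, (P3 ^ (2 * (k : ℕ) + 1) * Q2 ^ (a k)) ∈ V r := by
      intro k
      rw [mem_homogeneousSubmodule]
      have hh := (P3_hom.pow (2 * (k : ℕ) + 1)).mul (Q2_hom.pow (a (k : ℕ)))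
      rwa [hdeg (k : ℕ) k.2] at hh
    set el : Fin N → ↥(V r) := fun k => ⟨_, hfhom k⟩ with hel
    have hker : ∀ k : Fin N,
        (Submodule.Quotient.mk (el k) : ↥(V r) ⧸ K r) ∈ LinearMap.ker PhiSym := by
      intro k
      rw [LinearMap.mem_ker]
      have h0 : Phi ((el k : MvPolynomial (Fin 2) ℝ))
          = ((0 : ↥(V r)) : MvPolynomial (Fin 2) ℝ) := by
        rw [ZeroMemClass.coe_zero]
        exact Phi_fk _ _ (Nat.odd_iff.mpr (by omega))
      rw [hsym _ _ h0, Submodule.Quotient.mk_zero]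
    have li : LinearIndependent ℝ
        (fun k : Fin N => (Submodule.Quotient.mk (el k) : ↥(V r) ⧸ K r)) := by
      rw [linearIndependent_iff']
      intro s g hsum i hi
      have hq : ((K r).mkQ) (∑ k ∈ s, g k • el k) = 0 := by
        rw [map_sum]
        simpa only [map_smul, Submodule.mkQ_apply] using hsum
      have hmem : (∑ k ∈ s, g k • el k) ∈ K r := by
        rwa [← LinearMap.mem_ker, Submodule.ker_mkQ] at hq
      have hcoe : ((∑ k ∈ s, g k • el k : ↥(V r)) : MvPolynomial (Fin 2) ℝ)
          = ∑ k ∈ s, g k • (P3 ^ (2 * (k : ℕ) + 1) * Q2 ^ (a k)) := by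
        rw [show ((∑ k ∈ s, g k • el k : ↥(V r)) : MvPolynomial (Fin 2) ℝ)
            = (V r).subtype (∑ k ∈ s, g k • el k) from rfl, map_sum]
        refine Finset.sum_congr rfl fun k _ => ?_
        rw [map_smul]
        rfl
      have hswu : swapStar ((∑ k ∈ s, g k • el k : ↥(V r)) : MvPolynomial (Fin 2) ℝ)
          = ((∑ k ∈ s, g k • el k : ↥(V r)) : MvPolynomial (Fin 2) ℝ) := by
        rw [hcoe, map_sum]
        refine Finset.sum_congr rfl fun k _ => ?_
        rw [map_smul, swap_fk]
      have heq : ((∑ k ∈ s, g k • el k : ↥(V r)) : MvPolynomial (Fin 2) ℝ)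
          = -((∑ k ∈ s, g k • el k : ↥(V r)) : MvPolynomial (Fin 2) ℝ) :=
        hswu.symm.trans (K_antisym hmem)
      have h0 : ∑ k ∈ s, g k • (P3 ^ (2 * (k : ℕ) + 1) * Q2 ^ (a k)) = 0 := by
        have h2 : (2 : ℝ) • ((∑ k ∈ s, g k • el k : ↥(V r)) : MvPolynomial (Fin 2) ℝ) = 0 := by
          rw [two_smul]
          nth_rewrite 1 [heq]
          exact neg_add_cancel _
        have h3 := congrArg (fun z : MvPolynomial (Fin 2) ℝ => (2⁻¹ : ℝ) • z) h2
        simp only [smul_smul, smul_zero] at h3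
        norm_num at h3
        exact h3
      exact poly_indep (fun k => a (k : ℕ)) s g h0 i hi
    haveI : FiniteDimensional ℝ ↥(V r) := by
      refine Submodule.finiteDimensional_of_le (S₂ := restrictTotalDegree (Fin 2) ℝ r) ?_
      intro p hp
      rw [mem_restrictTotalDegree]
      exact ((mem_homogeneousSubmodule _ _).1 hp).totalDegree_le
    have hspan : Submodule.span ℝ
        (Set.range fun k : Fin N => (Submodule.Quotient.mk (el k) : ↥(V r) ⧸ K r))
        ≤ LinearMap.ker PhiSym := by
      rw [Submodule.span_le]
      rintro _ ⟨k, rfl⟩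
      exact hker k
    calc N = Module.finrank ℝ ↥(Submodule.span ℝ
        (Set.range fun k : Fin N => (Submodule.Quotient.mk (el k) : ↥(V r) ⧸ K r))) := by
          rw [finrank_span_eq_card li, Fintype.card_fin]
      _ ≤ Module.finrank ℝ ↥(LinearMap.ker PhiSym) := Submodule.finrank_mono hspan
  exact ⟨fun _ => le_trans (Nat.div_le_div_right (by omega)) main,
    fun _ => le_trans (Nat.div_le_div_right (by omega)) main,
    fun _ => le_trans (Nat.div_le_div_right (by omega)) main⟩
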